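/- Let G be a graph on n vertices (n ≥ 2) such that for every vertex x and every radius r ≤ 10·(log n)², the ball B_r(x) of radius r around x has at most n/(5 log n) vertices. Then there exists a set S ⊆ V(G) with |S| ≤ n/(5 log n) such that every connected component of G − S has at most n/(5 log n) vertices. -/
import Mathlib

open SimpleGraph

set_option linter.unusedSectionVars false
set_option maxHeartbeats 1000000

section Aux

variable {V : Type*} [Fintype V] (G : SimpleGraph V)

def gball (A : Set V) (x : V) (r : ℕ) : Set V :=
  {v : V | ∃ w : G.Walk x v, w.length ≤ r ∧ ∀ y ∈ w.support, y ∈ A}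

variable {G}

lemma gball_subset (A : Set V) (x : V) (r : ℕ) : gball G A x r ⊆ A := by
  rintro v ⟨w, -, hw⟩; exact hw v w.end_mem_support

lemma self_mem_gball {A : Set V} {x : V} (hx : x ∈ A) (r : ℕ) : x ∈ gball G A x r :=
  ⟨Walk.nil, by simp, by simpa using hx⟩

lemma gball_mono {A : Set V} {x : V} {r r' : ℕ} (h : r ≤ r') :
    gball G A x r ⊆ gball G A x r' := by
  rintro v ⟨w, hl, hw⟩; exact ⟨w, hl.trans h, hw⟩

lemma adj_mem_gball {A : Set V} {x v u : V} {r : ℕ} (hv : v ∈ gball G A x r)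
    (h : G.Adj v u) (hu : u ∈ A) : u ∈ gball G A x (r + 1) := by
  obtain ⟨w, hl, hw⟩ := hv
  refine ⟨w.append (Walk.cons h Walk.nil), ?_, ?_⟩
  · simp [Walk.length_append]; omega
  · intro y hy
    rw [Walk.support_append] at hy
    rcases List.mem_append.1 hy with hy | hy
    · exact hw y hy
    · simp at hy; subst hy; exact hu

lemma gball_stay {A sep : Set V} {x : V} {r : ℕ}
    (hsep : gball G A x (r + 1) \ gball G A x r ⊆ sep) :
    ∀ {v u : V} (w : G.Walk v u), v ∈ gball G A x r →
      (∀ y ∈ w.support, y ∈ A \ sep) → u ∈ gball G A x r := by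
  intro v u w
  induction w with
  | nil => exact fun hv _ => hv
  | @cons a b c hab p ih =>
    intro hv hsup
    have hb : b ∈ A \ sep := hsup b (by simp)
    have hb1 : b ∈ gball G A x (r + 1) := adj_mem_gball hv hab hb.1
    have hbr : b ∈ gball G A x r := by
      by_contra h; exact hb.2 (hsep ⟨hb1, h⟩)
    exact ih hbr fun y hy => hsup y (by simp [hy])

lemma gball_stayout {A sep : Set V} {x : V} {r : ℕ}
    (hsep : gball G A x (r + 1) \ gball G A x r ⊆ sep) :
    ∀ {v u : V} (w : G.Walk v u), v ∉ gball G A x (r + 1) →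
      (∀ y ∈ w.support, y ∈ A \ sep) → ∀ y ∈ w.support, y ∉ gball G A x (r + 1) := by
  intro v u w
  induction w with
  | nil => intro hv _ y hy; simp at hy; subst hy; exact hv
  | @cons a b c hab p ih =>
    intro hv hsup y hy
    have ha : a ∈ A := (hsup a (by simp)).1
    have hb2 : b ∈ A \ sep := hsup b (by simp)
    have hbout : b ∉ gball G A x (r + 1) := by
      intro hb1
      by_cases hbr : b ∈ gball G A x r
      · exact hv (adj_mem_gball hbr hab.symm ha)
      · exact hb2.2 (hsep ⟨hb1, hbr⟩)
    rw [Walk.support_cons] at hy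
    rcases List.mem_cons.1 hy with rfl | hy
    · exact hv
    · exact ih hbout (fun z hz => hsup z (by simp [hz])) y hy

lemma exp_half_le {x : ℝ} (h0 : 0 ≤ x) (h1 : x ≤ 1) : Real.exp (x / 2) ≤ 1 + x := by
  have h2 : (0:ℝ) < 1 - x / 2 := by linarith
  have h3 : -(x / 2) + 1 ≤ Real.exp (-(x / 2)) := Real.add_one_le_exp _
  have h4 : Real.exp (-(x / 2)) = (Real.exp (x / 2))⁻¹ := Real.exp_neg _
  have h5 : 0 < Real.exp (x / 2) := Real.exp_pos _
  have h6 : Real.exp (x / 2) * (1 - x / 2) ≤ 1 := by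
    have : 1 - x / 2 ≤ (Real.exp (x / 2))⁻¹ := by rw [← h4]; linarith
    calc Real.exp (x / 2) * (1 - x / 2) ≤ Real.exp (x / 2) * (Real.exp (x / 2))⁻¹ :=
          mul_le_mul_of_nonneg_left this h5.le
      _ = 1 := mul_inv_cancel₀ h5.ne'
  nlinarith [sq_nonneg x]

lemma key_ineq (n : ℕ) (hn2 : 2 ≤ n) :
    (n : ℝ) / (5 * Real.log n) < (1 + 1 / (5 * Real.log n)) ^ ⌊10 * Real.log n ^ 2⌋₊ := by
  have hn1 : (2:ℝ) ≤ n := by exact_mod_cast hn2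
  have hL2 : Real.log 2 ≤ Real.log n := Real.log_le_log (by norm_num) hn1
  have hl2 : (0.6931471803:ℝ) < Real.log 2 := Real.log_two_gt_d9
  set L : ℝ := Real.log n with hLdef
  have hL : (0.693:ℝ) < L := by linarith
  have hL0 : (0:ℝ) < L := by linarith
  have hx0 : (0:ℝ) < 1 / (5 * L) := by positivity
  have hx1 : 1 / (5 * L) ≤ 1 := by
    rw [div_le_one (by positivity)]; linarith
  set x : ℝ := 1 / (5 * L) with hxdef
  set R : ℕ := ⌊10 * L ^ 2⌋₊ with hRdef
  have hRlb : (10 * L ^ 2 - 1 : ℝ) < R := by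
    have := Nat.lt_floor_add_one (10 * L ^ 2); linarith
  have hexpL : Real.exp L = n := Real.exp_log (by linarith)
  have step1 : Real.exp (x / 2) ^ R ≤ (1 + x) ^ R :=
    pow_le_pow_left₀ (Real.exp_pos _).le (exp_half_le hx0.le hx1) R
  have step2 : Real.exp ((R : ℝ) * (x / 2)) = Real.exp (x / 2) ^ R := Real.exp_nat_mul _ R
  have step3 : L - 1 / (10 * L) < (R : ℝ) * (x / 2) := by
    have h2 : (10 * L ^ 2 - 1) * (x / 2) = L - 1 / (10 * L) := by
      rw [hxdef]; field_simp; ring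
    have := mul_lt_mul_of_pos_right hRlb (by positivity : (0:ℝ) < x / 2)
    linarith
  have hE : Real.exp (1 / (10 * L)) ≤ 5 * L := by
    have h1 : Real.exp (1 / (10 * L)) ≤ Real.exp 1 := by
      apply Real.exp_le_exp.2
      rw [div_le_one (by positivity)]; linarith
    have h2 : Real.exp 1 < 2.7182818286 := Real.exp_one_lt_d9
    linarith
  have step4 : (n : ℝ) / (5 * L) ≤ (n : ℝ) * Real.exp (-(1 / (10 * L))) := by
    have hEpos : (0:ℝ) < Real.exp (1 / (10 * L)) := Real.exp_pos _
    rw [Real.exp_neg, ← div_eq_mul_inv]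
    exact div_le_div_of_nonneg_left (by linarith) hEpos hE
  have step5 : (n : ℝ) * Real.exp (-(1 / (10 * L))) < Real.exp ((R : ℝ) * (x / 2)) := by
    have : Real.exp (L - 1 / (10 * L)) < Real.exp ((R : ℝ) * (x / 2)) := Real.exp_lt_exp.2 step3
    rwa [Real.exp_sub, hexpL, div_eq_mul_inv, ← Real.exp_neg] at this
  calc (n : ℝ) / (5 * L) ≤ (n : ℝ) * Real.exp (-(1 / (10 * L))) := step4
    _ < Real.exp ((R : ℝ) * (x / 2)) := step5
    _ = Real.exp (x / 2) ^ R := step2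
    _ ≤ (1 + x) ^ R := step1

theorem key_lemma (n : ℕ) (hn2 : 2 ≤ n)
    (hball : ∀ (x : V) (r : ℕ), (r : ℝ) ≤ 10 * (Real.log n) ^ 2 →
      (({v : V | ∃ w : G.Walk x v, w.length ≤ r}.ncard : ℝ)) ≤ n / (5 * Real.log n)) :
    ∀ (m : ℕ) (A : Set V), A.ncard ≤ m →
      ∃ S : Set V, S ⊆ A ∧ (S.ncard : ℝ) ≤ A.ncard / (5 * Real.log n) ∧
        ∀ v ∈ A \ S,
          (({u : V | ∃ w : G.Walk v u, ∀ y ∈ w.support, y ∈ A \ S}.ncard : ℝ))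
            ≤ n / (5 * Real.log n) := by
  have hn1 : (2:ℝ) ≤ n := by exact_mod_cast hn2
  have hL2 : Real.log 2 ≤ Real.log n := Real.log_le_log (by norm_num) hn1
  have hl2 : (0.6931471803:ℝ) < Real.log 2 := Real.log_two_gt_d9
  set L : ℝ := Real.log n with hLdef
  have hL0 : (0:ℝ) < L := by linarith
  have h5L : (0:ℝ) < 5 * L := by linarith
  have hempty : ∀ A : Set V, A = ∅ →
      ∃ S : Set V, S ⊆ A ∧ (S.ncard : ℝ) ≤ A.ncard / (5 * L) ∧
        ∀ v ∈ A \ S,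
          (({u : V | ∃ w : G.Walk v u, ∀ y ∈ w.support, y ∈ A \ S}.ncard : ℝ))
            ≤ n / (5 * L) := by
    rintro A rfl
    exact ⟨∅, subset_rfl, by simp, by rintro v ⟨hv, -⟩; simp at hv⟩
  intro m
  induction m with
  | zero =>
    intro A hA
    exact hempty A ((Set.ncard_eq_zero (Set.toFinite A)).1 (Nat.le_zero.1 hA))
  | succ m ih =>
    intro A hA
    rcases Set.eq_empty_or_nonempty A with rfl | ⟨z, hz⟩
    · exact hempty ∅ rfl
    set c : ℝ := 1 / (5 * L) with hcdef
    have hc0 : (0:ℝ) < c := by positivity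
    set R : ℕ := ⌊10 * L ^ 2⌋₊ with hRdef
    have hRle : (R : ℝ) ≤ 10 * L ^ 2 := Nat.floor_le (by positivity)
    set b : ℕ → ℝ := fun r => ((gball G A z r).ncard : ℝ) with hbdef
    have hbr_eq : ∀ r : ℕ, b r = ((gball G A z r).ncard : ℝ) := fun r => rfl
    have hb_le : ∀ r : ℕ, (r : ℝ) ≤ 10 * L ^ 2 → b r ≤ n / (5 * L) := by
      intro r hr
      refine le_trans ?_ (hball z r hr)
      have hsub : gball G A z r ⊆ {v : V | ∃ w : G.Walk z v, w.length ≤ r} := by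
        rintro v ⟨w, hl, -⟩; exact ⟨w, hl⟩
      exact_mod_cast Nat.cast_le.2 (Set.ncard_le_ncard hsub (Set.toFinite _))
    have hb_mono : ∀ r : ℕ, b r ≤ b (r + 1) := by
      intro r
      rw [hbr_eq, hbr_eq]
      exact_mod_cast Set.ncard_le_ncard
        (gball_mono (G := G) (A := A) (x := z) (Nat.le_succ r)) (Set.toFinite _)
    have hb0 : (1:ℝ) ≤ b 0 := by
      have h : 0 < (gball G A z 0).ncard :=
        (Set.ncard_pos (Set.toFinite _)).2 ⟨z, self_mem_gball hz 0⟩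
      rw [hbr_eq]
      exact_mod_cast h
    have hex : ∃ r, r < R ∧ b (r + 1) ≤ (1 + c) * b r := by
      by_contra hcon
      push_neg at hcon
      have grow : ∀ k, k ≤ R → (1 + c) ^ k ≤ b k := by
        intro k
        induction k with
        | zero => intro _; simpa using hb0
        | succ k ihk =>
          intro hk
          have h1 : (1 + c) ^ k ≤ b k := ihk (by omega)
          have h2 : (1 + c) * b k < b (k + 1) := hcon k (by omega)
          have h3 : (1 + c) ^ (k + 1) = (1 + c) ^ k * (1 + c) := by ring
          have h4 : (1 + c) ^ k * (1 + c) ≤ b k * (1 + c) :=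
            mul_le_mul_of_nonneg_right h1 (by linarith)
          nlinarith
      have h1 : (1 + c) ^ R ≤ b R := grow R le_rfl
      have h2 : b R ≤ n / (5 * L) := hb_le R hRle
      have h3 := key_ineq n hn2
      rw [← hLdef, ← hcdef, ← hRdef] at h3
      linarith
    obtain ⟨r, hrR, hr⟩ := hex
    set C : Set V := gball G A z r with hCdef
    set B1 : Set V := gball G A z (r + 1) with hB1def
    have hCB : C ⊆ B1 := gball_mono (Nat.le_succ r)
    set sep : Set V := B1 \ C with hsepdef
    have hB1A : B1 ⊆ A := gball_subset A z (r + 1)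
    set A' : Set V := A \ B1 with hA'def
    have hzB1 : z ∈ B1 := self_mem_gball hz (r + 1)
    have hA'm : A'.ncard ≤ m := by
      have hss : A' ⊂ A := ⟨Set.diff_subset, fun h => (h hz).2 hzB1⟩
      have := Set.ncard_lt_ncard hss (Set.toFinite A)
      omega
    obtain ⟨S', hS'sub, hS'card, hS'comp⟩ := ih A' hA'm
    refine ⟨sep ∪ S', ?_, ?_, ?_⟩
    · exact Set.union_subset (Set.diff_subset.trans hB1A)
        (hS'sub.trans Set.diff_subset)
    · -- cardinality bound
      rw [le_div_iff₀ h5L]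
      have hcnat : C.ncard ≤ B1.ncard := Set.ncard_le_ncard hCB (Set.toFinite _)
      have hsepcard : (sep.ncard : ℝ) = b (r + 1) - b r := by
        rw [hsepdef, Set.ncard_diff hCB (Set.toFinite _)]
        push_cast [Nat.cast_sub hcnat]
        rfl
      have hB1nat : B1.ncard ≤ A.ncard := Set.ncard_le_ncard hB1A (Set.toFinite _)
      have hA'card : (A'.ncard : ℝ) = (A.ncard : ℝ) - b (r + 1) := by
        rw [hA'def, Set.ncard_diff hB1A (Set.toFinite _)]
        push_cast [Nat.cast_sub hB1nat]
        rfl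
      have hU : ((sep ∪ S').ncard : ℝ) ≤ (sep.ncard : ℝ) + (S'.ncard : ℝ) := by
        exact_mod_cast Nat.cast_le.2 (Set.ncard_union_le sep S')
      have e1 : (sep.ncard : ℝ) * (5 * L) ≤ b (r + 1) := by
        rw [hsepcard]
        have h' : b (r + 1) - b r ≤ c * b r := by nlinarith [hr]
        calc (b (r + 1) - b r) * (5 * L) ≤ (c * b r) * (5 * L) :=
              mul_le_mul_of_nonneg_right h' h5L.le
          _ = b r := by rw [hcdef]; field_simp
          _ ≤ b (r + 1) := hb_mono r
      have e2 : (S'.ncard : ℝ) * (5 * L) ≤ (A.ncard : ℝ) - b (r + 1) := by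
        have := (le_div_iff₀ h5L).1 hS'card
        rwa [hA'card] at this
      nlinarith [mul_le_mul_of_nonneg_right hU h5L.le]
    · -- component bound
      intro v hv
      have hsepS : sep ⊆ sep ∪ S' := Set.subset_union_left
      have hS'S : S' ⊆ sep ∪ S' := Set.subset_union_right
      have havoid : ∀ {p q : V} (w : G.Walk p q),
          (∀ y ∈ w.support, y ∈ A \ (sep ∪ S')) → ∀ y ∈ w.support, y ∈ A \ sep := by
        intro p q w hw y hy
        exact ⟨(hw y hy).1, fun h => (hw y hy).2 (hsepS h)⟩
      by_cases hvC : v ∈ C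
      · have hsub : {u : V | ∃ w : G.Walk v u, ∀ y ∈ w.support, y ∈ A \ (sep ∪ S')} ⊆ C := by
          rintro u ⟨w, hw⟩
          exact gball_stay subset_rfl w hvC (havoid w hw)
        have h1 : (({u : V | ∃ w : G.Walk v u, ∀ y ∈ w.support, y ∈ A \ (sep ∪ S')}.ncard : ℝ))
            ≤ b r := by
          rw [hbr_eq]
          exact_mod_cast Set.ncard_le_ncard hsub (Set.toFinite _)
        refine h1.trans (hb_le r ?_)
        calc (r : ℝ) ≤ (R : ℝ) := by exact_mod_cast hrR.le
          _ ≤ 10 * L ^ 2 := hRle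
      · have hvB1 : v ∉ B1 := by
          intro h
          exact hv.2 (hsepS ⟨h, hvC⟩)
        have hvA' : v ∈ A' \ S' :=
          ⟨⟨hv.1, hvB1⟩, fun h => hv.2 (hS'S h)⟩
        have hsub : {u : V | ∃ w : G.Walk v u, ∀ y ∈ w.support, y ∈ A \ (sep ∪ S')} ⊆
            {u : V | ∃ w : G.Walk v u, ∀ y ∈ w.support, y ∈ A' \ S'} := by
          rintro u ⟨w, hw⟩
          have hout := gball_stayout subset_rfl w hvB1 (havoid w hw)
          exact ⟨w, fun y hy =>
            ⟨⟨(hw y hy).1, hout y hy⟩, fun h => (hw y hy).2 (hS'S h)⟩⟩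
        have h1 : (({u : V | ∃ w : G.Walk v u, ∀ y ∈ w.support, y ∈ A \ (sep ∪ S')}.ncard : ℝ))
            ≤ (({u : V | ∃ w : G.Walk v u, ∀ y ∈ w.support, y ∈ A' \ S'}.ncard : ℝ)) := by
          exact_mod_cast Set.ncard_le_ncard hsub (Set.toFinite _)
        exact le_trans h1 (hS'comp v hvA')

end Aux

/-- If every ball of radius at most `10 (log n)²` in an `n`-vertex graph has at
most `n/(5 log n)` vertices, then some set `S` of at most `n/(5 log n)` vertices
can be removed so that every connected component of the remainder has at most
`n/(5 log n)` vertices. -/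
theorem stmt_10 {V : Type*} [Fintype V] (G : SimpleGraph V)
    (n : ℕ) (hn : n = Fintype.card V) (hn2 : 2 ≤ n)
    (hball : ∀ (x : V) (r : ℕ), (r : ℝ) ≤ 10 * (Real.log n) ^ 2 →
      (({v : V | ∃ w : G.Walk x v, w.length ≤ r}.ncard : ℝ)) ≤ n / (5 * Real.log n)) :
    ∃ S : Set V, ((S.ncard : ℝ)) ≤ n / (5 * Real.log n) ∧
      ∀ v : V, v ∉ S →
        (({u : V | ∃ w : G.Walk v u, ∀ x ∈ w.support, x ∉ S}.ncard : ℝ))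
          ≤ n / (5 * Real.log n) := by
  have huniv : (Set.univ : Set V).ncard = n := by
    rw [Set.ncard_univ, Nat.card_eq_fintype_card, hn]
  obtain ⟨S, hSsub, hScard, hScomp⟩ :=
    key_lemma (G := G) n hn2 hball n Set.univ (le_of_eq huniv)
  refine ⟨S, ?_, ?_⟩
  · rwa [huniv] at hScard
  · intro v hvS
    have h := hScomp v ⟨Set.mem_univ v, hvS⟩
    have heq : {u : V | ∃ w : G.Walk v u, ∀ y ∈ w.support, y ∈ Set.univ \ S}
        = {u : V | ∃ w : G.Walk v u, ∀ x ∈ w.support, x ∉ S} := by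
      ext u
      simp [Set.mem_diff]
    rwa [heq] at h
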